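/- The sequence of Bell numbers B_n is log-convex: B_{n-1} B_{n+1} ≥ B_n^2 for all n ≥ 1. -/

import Mathlib

open Finset

noncomputable def fB (n k : ℕ) : ℝ := (k : ℝ) ^ n / (Nat.factorial k : ℝ)

lemma fB_nonneg (n k : ℕ) : 0 ≤ fB n k := by
  unfold fB; positivity

lemma fB_shift (n k : ℕ) : fB (n + 1) (k + 1) = ((k : ℝ) + 1) ^ n / (Nat.factorial k : ℝ) := by
  unfold fB
  rw [Nat.factorial_succ]
  have h1 : (Nat.factorial k : ℝ) ≠ 0 := by positivity
  push_cast
  rw [pow_succ]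
  field_simp

lemma fB_expand (n k : ℕ) :
    fB (n + 1) (k + 1) = ∑ m ∈ range (n + 1), (n.choose m : ℝ) * fB m k := by
  rw [fB_shift]
  have h : ((k : ℝ) + 1) ^ n = ∑ m ∈ range (n + 1), (n.choose m : ℝ) * (k : ℝ) ^ m := by
    rw [add_pow]
    refine Finset.sum_congr rfl fun m _ => ?_
    ring
  rw [h, Finset.sum_div]
  refine Finset.sum_congr rfl fun m _ => ?_
  unfold fB
  ring

lemma fB_summable : ∀ n, Summable (fB n) := by
  intro n
  induction n using Nat.strong_induction_on with
  | _ n ih =>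
    match n with
    | 0 =>
      have h := Real.summable_pow_div_factorial 1
      refine h.congr fun k => ?_
      simp [fB]
    | n + 1 =>
      rw [← summable_nat_add_iff 1]
      have h : Summable (fun k => ∑ m ∈ range (n + 1), (n.choose m : ℝ) * fB m k) :=
        summable_sum fun m hm => (ih m (by simp at hm; omega)).mul_left _
      exact h.congr fun k => (fB_expand n k).symm

noncomputable def EB (n : ℕ) : ℝ := ∑' k, fB n k

lemma EB_nonneg (n : ℕ) : 0 ≤ EB n := tsum_nonneg (fun k => fB_nonneg n k)

lemma EB_rec (n : ℕ) : EB (n + 1) = ∑ m ∈ range (n + 1), (n.choose m : ℝ) * EB m := by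
  unfold EB
  rw [Summable.tsum_eq_zero_add (fB_summable (n + 1))]
  have h0 : fB (n + 1) 0 = 0 := by simp [fB]
  rw [h0, zero_add]
  calc (∑' k, fB (n + 1) (k + 1))
      = ∑' k, ∑ m ∈ range (n + 1), (n.choose m : ℝ) * fB m k :=
        tsum_congr fun k => fB_expand n k
    _ = ∑ m ∈ range (n + 1), ∑' k, (n.choose m : ℝ) * fB m k := by
        apply Summable.tsum_finsetSum
        intro m _
        exact (fB_summable m).mul_left _
    _ = ∑ m ∈ range (n + 1), (n.choose m : ℝ) * ∑' k, fB m k := by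
        refine Finset.sum_congr rfl fun m _ => ?_
        exact tsum_mul_left

lemma fB_sq (n k : ℕ) : fB n k * fB (n + 2) k = fB (n + 1) k ^ 2 := by
  unfold fB
  rw [div_mul_div_comm, ← pow_add, div_pow, ← pow_mul]
  ring_nf

lemma EB_CS (n : ℕ) : EB (n + 1) ^ 2 ≤ EB n * EB (n + 2) := by
  have hprodnn : 0 ≤ EB n * EB (n + 2) := mul_nonneg (EB_nonneg n) (EB_nonneg (n + 2))
  have key : ∀ s : Finset ℕ, ∑ k ∈ s, fB (n + 1) k ≤ Real.sqrt (EB n * EB (n + 2)) := by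
    intro s
    have h1 : (∑ k ∈ s, fB (n + 1) k) ^ 2 ≤ (∑ k ∈ s, fB n k) * (∑ k ∈ s, fB (n + 2) k) := by
      have hcs := Finset.sum_mul_sq_le_sq_mul_sq s (fun k => Real.sqrt (fB n k))
        (fun k => Real.sqrt (fB (n + 2) k))
      have e1 : ∀ k, Real.sqrt (fB n k) * Real.sqrt (fB (n + 2) k) = fB (n + 1) k := by
        intro k
        rw [← Real.sqrt_mul (fB_nonneg n k), fB_sq,
          Real.sqrt_sq (fB_nonneg (n + 1) k)]
      have e2 : ∀ k, Real.sqrt (fB n k) ^ 2 = fB n k := fun k => Real.sq_sqrt (fB_nonneg n k)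
      have e3 : ∀ k, Real.sqrt (fB (n + 2) k) ^ 2 = fB (n + 2) k :=
        fun k => Real.sq_sqrt (fB_nonneg (n + 2) k)
      simpa [e1, e2, e3] using hcs
    have h2 : (∑ k ∈ s, fB n k) * (∑ k ∈ s, fB (n + 2) k) ≤ EB n * EB (n + 2) := by
      apply mul_le_mul
      · exact Summable.sum_le_tsum s (fun k _ => fB_nonneg n k) (fB_summable n)
      · exact Summable.sum_le_tsum s (fun k _ => fB_nonneg (n + 2) k) (fB_summable (n + 2))
      · exact Finset.sum_nonneg fun k _ => fB_nonneg (n + 2) k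
      · exact EB_nonneg n
    have h3 : (∑ k ∈ s, fB (n + 1) k) ^ 2 ≤ EB n * EB (n + 2) := le_trans h1 h2
    have h4 : 0 ≤ ∑ k ∈ s, fB (n + 1) k := Finset.sum_nonneg fun k _ => fB_nonneg (n + 1) k
    calc ∑ k ∈ s, fB (n + 1) k = Real.sqrt ((∑ k ∈ s, fB (n + 1) k) ^ 2) :=
          (Real.sqrt_sq h4).symm
      _ ≤ Real.sqrt (EB n * EB (n + 2)) := Real.sqrt_le_sqrt h3
  have h5 : EB (n + 1) ≤ Real.sqrt (EB n * EB (n + 2)) :=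
    Summable.tsum_le_of_sum_le (fB_summable (n + 1)) key
  calc EB (n + 1) ^ 2 ≤ Real.sqrt (EB n * EB (n + 2)) ^ 2 := by
        apply pow_le_pow_left₀ (EB_nonneg (n + 1)) h5
    _ = EB n * EB (n + 2) := Real.sq_sqrt hprodnn

theorem logConvex_bell (B : ℕ → ℝ) (hB0 : B 0 = 1)
    (hrec : ∀ n : ℕ, B (n + 1) = ∑ k ∈ Finset.range (n + 1), (n.choose k : ℝ) * B k) :
    ∀ n : ℕ, B n * B (n + 2) ≥ B (n + 1) ^ 2 := by
  have hB : ∀ n, B n * EB 0 = EB n := by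
    intro n
    induction n using Nat.strong_induction_on with
    | _ n ih =>
      match n with
      | 0 => rw [hB0, one_mul]
      | n + 1 =>
        rw [hrec n, EB_rec n, Finset.sum_mul]
        refine Finset.sum_congr rfl fun m hm => ?_
        rw [mul_assoc, ih m (by simp at hm; omega)]
  have hc : (0 : ℝ) < EB 0 := by
    have h1 : fB 0 0 ≤ EB 0 := Summable.le_tsum (fB_summable 0) 0 (fun k _ => fB_nonneg 0 k)
    have h0 : fB 0 0 = 1 := by simp [fB]
    linarith
  intro n
  have h := EB_CS n
  have e1 := hB n
  have e2 := hB (n + 1)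
  have e3 := hB (n + 2)
  rw [ge_iff_le]
  have key : (B (n + 1) * EB 0) ^ 2 ≤ (B n * EB 0) * (B (n + 2) * EB 0) := by
    rw [e1, e2, e3]; exact h
  nlinarith [mul_pos hc hc]
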